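/- Fix μ > 0 and let M(μ) = max over nonnegative integers k of e^{−μ}·μ^k/k! (the maximum exists and is positive). For every ε > 0 there exists n₀ ≥ μ such that for every n > n₀, in the n-agent economy with independent prior with parameter π_n = μ/n: (1) there exists a reduced form implementable pair (Qa, Qb) with Qa − Qb > M(μ) − ε, and (2) there exists a reduced form implementable pair (Q̂a, Q̂b) with Q̂b − Q̂a > M(μ) − ε. -/

import Mathlib

open Finset Filter Topology

noncomputable def Taux (n : ℕ) (p : ℝ) (j : ℕ) : ℝ :=
  (j : ℝ) * (n.choose j : ℝ) * p ^ j * (1 - p) ^ (n + 1 - j)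

lemma step_eq (n k : ℕ) (hk : k ≤ n) (p : ℝ) :
    ((k : ℝ) - (n : ℝ) * p) * ((n.choose k : ℝ) * p ^ k * (1 - p) ^ (n - k))
      = Taux n p k - Taux n p (k + 1) := by
  have h1 : n + 1 - k = (n - k) + 1 := by omega
  have h2 : n + 1 - (k + 1) = n - k := by omega
  have h3 : ((n.choose (k + 1) : ℝ)) * ((k : ℝ) + 1)
      = (n.choose k : ℝ) * ((n : ℝ) - (k : ℝ)) := by
    have h := Nat.choose_succ_right_eq n k
    have h' : ((n.choose (k + 1) * (k + 1) : ℕ) : ℝ) = ((n.choose k * (n - k) : ℕ) : ℝ) := by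
      exact_mod_cast congrArg (Nat.cast : ℕ → ℝ) h
    push_cast [Nat.cast_sub hk] at h'
    linarith
  simp only [Taux, h1, h2, pow_succ]
  push_cast
  linear_combination (p ^ k * p * (1 - p) ^ (n - k)) * h3

lemma sum_hi (n m : ℕ) (hm : m ≤ n) (p : ℝ) :
    ∑ k ∈ Ico m (n + 1), ((k : ℝ) - (n : ℝ) * p) * ((n.choose k : ℝ) * p ^ k * (1 - p) ^ (n - k))
      = Taux n p m := by
  rw [Finset.sum_congr rfl
    (fun k hk => step_eq n k (by have := (mem_Ico.mp hk).2; omega) p)]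
  rw [Finset.sum_Ico_eq_sub _ (by omega : m ≤ n + 1),
    Finset.sum_range_sub' (Taux n p), Finset.sum_range_sub' (Taux n p)]
  have hz : Taux n p (n + 1) = 0 := by
    simp [Taux, Nat.choose_eq_zero_of_lt (by omega : n < n + 1)]
  rw [hz]; ring

lemma sum_lo (n m : ℕ) (hm : m ≤ n) (p : ℝ) :
    ∑ k ∈ range m, ((n : ℝ) * p - (k : ℝ)) * ((n.choose k : ℝ) * p ^ k * (1 - p) ^ (n - k))
      = Taux n p m := by
  have hptw : ∀ k ∈ range m, ((n : ℝ) * p - (k : ℝ)) *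
      ((n.choose k : ℝ) * p ^ k * (1 - p) ^ (n - k)) = Taux n p (k + 1) - Taux n p k := by
    intro k hk
    have := step_eq n k (by have := mem_range.mp hk; omega) p
    linarith
  rw [Finset.sum_congr rfl hptw, Finset.sum_range_sub (Taux n p)]
  have hz : Taux n p 0 = 0 := by simp [Taux]
  rw [hz]; ring

lemma choose_mul_pow_tendsto (μ : ℝ) : ∀ m : ℕ,
    Tendsto (fun n : ℕ => (n.choose m : ℝ) * (μ / n) ^ m) atTop (𝓝 (μ ^ m / m.factorial)) := by
  intro m
  induction m with
  | zero => simpa using tendsto_const_nhds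
  | succ m ih =>
    have h2 : Tendsto (fun n : ℕ => ((n : ℝ) - m) * μ / (((m : ℝ) + 1) * n)) atTop
        (𝓝 (μ / ((m : ℝ) + 1))) := by
      have hbase : Tendsto (fun n : ℕ => (1 - (m : ℝ) / n) * (μ / ((m : ℝ) + 1))) atTop
          (𝓝 ((1 - 0) * (μ / ((m : ℝ) + 1)))) :=
        ((tendsto_const_nhds.sub (tendsto_const_div_atTop_nhds_zero_nat (m : ℝ))).mul
          tendsto_const_nhds)
      have : ((1 : ℝ) - 0) * (μ / ((m : ℝ) + 1)) = μ / ((m : ℝ) + 1) := by ring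
      rw [this] at hbase
      refine hbase.congr' ?_
      filter_upwards [eventually_ge_atTop 1] with n hn
      have hn0 : (n : ℝ) ≠ 0 := by positivity
      field_simp
      try ring
      try exact Or.inl trivial
    have hval : μ ^ m / (m.factorial : ℝ) * (μ / ((m : ℝ) + 1)) =
        μ ^ (m + 1) / ((m + 1).factorial : ℝ) := by
      have hf : ((m + 1).factorial : ℝ) = ((m : ℝ) + 1) * (m.factorial : ℝ) := by
        push_cast [Nat.factorial_succ]; ring
      have hfne : (m.factorial : ℝ) ≠ 0 := by
        exact_mod_cast m.factorial_ne_zero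
      rw [hf, pow_succ]
      field_simp
      try ring
      try exact Or.inl trivial
    have hev : (fun n : ℕ => ((n.choose m : ℝ) * (μ / n) ^ m) *
        (((n : ℝ) - m) * μ / (((m : ℝ) + 1) * n)))
        =ᶠ[atTop] fun n : ℕ => (n.choose (m + 1) : ℝ) * (μ / n) ^ (m + 1) := by
      filter_upwards [eventually_ge_atTop (m + 1)] with n hn
      have hn0 : (n : ℝ) ≠ 0 := by
        have : 1 ≤ n := le_trans (Nat.le_add_left 1 m) hn
        positivity
      have h3 : ((n.choose (m + 1) : ℝ)) * ((m : ℝ) + 1)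
          = (n.choose m : ℝ) * ((n : ℝ) - (m : ℝ)) := by
        have h := Nat.choose_succ_right_eq n m
        have h' : ((n.choose (m + 1) * (m + 1) : ℕ) : ℝ) = ((n.choose m * (n - m) : ℕ) : ℝ) := by
          exact_mod_cast congrArg (Nat.cast : ℕ → ℝ) h
        push_cast [Nat.cast_sub (by omega : m ≤ n)] at h'
        linarith
      rw [pow_succ]
      have hm1 : ((m : ℝ) + 1) ≠ 0 := by positivity
      rw [div_pow]
      field_simp
      linear_combination (-(μ ^ m * μ)) * h3
    rw [← hval]
    exact (ih.mul h2).congr' hev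

lemma Dlim (μ : ℝ) (hμ : 0 < μ) (m : ℕ) :
    Tendsto (fun n : ℕ => ((m : ℝ) / μ) * ((n.choose m : ℝ) * (μ / n) ^ m) *
      ((1 - μ / n) ^ (n - m))) atTop
      (𝓝 (((m : ℝ) / μ) * (μ ^ m / m.factorial) * Real.exp (-μ))) := by
  have h1 := choose_mul_pow_tendsto μ m
  have hA : Tendsto (fun n : ℕ => (1 - μ / n) ^ n) atTop (𝓝 (Real.exp (-μ))) := by
    refine (Real.tendsto_one_add_div_pow_exp (-μ)).congr fun n => ?_
    rw [neg_div, ← sub_eq_add_neg]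
  have hB : Tendsto (fun n : ℕ => (1 - μ / n) ^ m) atTop (𝓝 1) := by
    have h : Tendsto (fun n : ℕ => (1 : ℝ) - μ / n) atTop (𝓝 (1 - 0)) :=
      tendsto_const_nhds.sub (tendsto_const_div_atTop_nhds_zero_nat μ)
    simpa using h.pow m
  have h2 : Tendsto (fun n : ℕ => (1 - μ / n) ^ (n - m)) atTop (𝓝 (Real.exp (-μ))) := by
    have hd := hA.div hB one_ne_zero
    rw [div_one] at hd
    refine hd.congr' ?_
    filter_upwards [eventually_ge_atTop m, eventually_gt_atTop ⌈μ⌉₊] with n hn1 hn2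
    have hμn : μ < n := lt_of_le_of_lt (Nat.le_ceil μ) (by exact_mod_cast hn2)
    have hn0 : (0 : ℝ) < n := lt_trans hμ hμn
    have hne : (1 : ℝ) - μ / n ≠ 0 := by
      have : μ / n < 1 := (div_lt_one hn0).mpr hμn
      linarith
    simp only [Pi.div_apply]
    rw [pow_sub₀ _ hne hn1, div_eq_mul_inv]
  exact (tendsto_const_nhds.mul h1).mul h2

/-- Proposition 4: for fixed mean `μ > 0` and independent priors with `π_n = μ/n`,
with `M(μ) = max_k e^{−μ}·μ^k/k!` (which exists and is positive), for large `n` there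
exist reduced form implementable pairs whose interim allocation probabilities differ
by more than `M(μ) − ε` in both directions. -/
theorem large_economy_fixed_mean
    (μ : ℝ) (hμ : 0 < μ) (M : ℝ) (hMpos : 0 < M)
    (hMattained : ∃ k : ℕ, M = Real.exp (-μ) * μ ^ k / (Nat.factorial k : ℝ))
    (hMmax : ∀ k : ℕ, Real.exp (-μ) * μ ^ k / (Nat.factorial k : ℝ) ≤ M) :
    ∀ ε > (0 : ℝ), ∃ n₀ : ℕ, μ ≤ (n₀ : ℝ) ∧ ∀ n : ℕ, n > n₀ →
      ((∃ Qa Qb : ℝ,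
        (∃ q : ℕ → ℝ, (∀ k ≤ n, 0 ≤ q k ∧ q k ≤ 1) ∧
          (1 / (n * (μ / n))) * ∑ k ∈ range (n + 1),
            (k : ℝ) * q k * ((n.choose k : ℝ) * (μ / n) ^ k * (1 - μ / n) ^ (n - k)) = Qa ∧
          (1 / (n * (1 - μ / n))) * ∑ k ∈ range (n + 1),
            ((n : ℝ) - k) * q k * ((n.choose k : ℝ) * (μ / n) ^ k * (1 - μ / n) ^ (n - k)) = Qb) ∧
        Qa - Qb > M - ε) ∧
      (∃ Qa Qb : ℝ,
        (∃ q : ℕ → ℝ, (∀ k ≤ n, 0 ≤ q k ∧ q k ≤ 1) ∧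
          (1 / (n * (μ / n))) * ∑ k ∈ range (n + 1),
            (k : ℝ) * q k * ((n.choose k : ℝ) * (μ / n) ^ k * (1 - μ / n) ^ (n - k)) = Qa ∧
          (1 / (n * (1 - μ / n))) * ∑ k ∈ range (n + 1),
            ((n : ℝ) - k) * q k * ((n.choose k : ℝ) * (μ / n) ^ k * (1 - μ / n) ^ (n - k)) = Qb) ∧
        Qb - Qa > M - ε)) := by
  intro ε hε
  obtain ⟨k₀, hk₀⟩ := hMattained
  set m : ℕ := k₀ + 1 with hm
  -- the common difference value
  set D : ℕ → ℝ := fun n => ((m : ℝ) / μ) * ((n.choose m : ℝ) * (μ / n) ^ m) *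
      ((1 - μ / n) ^ (n - m)) with hD
  have hLeq : ((m : ℝ) / μ) * (μ ^ m / m.factorial) * Real.exp (-μ) = M := by
    rw [hk₀, hm]
    have hfne : ((k₀.factorial : ℝ)) ≠ 0 := by exact_mod_cast k₀.factorial_ne_zero
    have hk1 : ((k₀ : ℝ) + 1) ≠ 0 := by positivity
    push_cast [Nat.factorial_succ, pow_succ]
    field_simp
  have hDlim : Tendsto D atTop (𝓝 M) := by
    rw [← hLeq]; exact Dlim μ hμ m
  have hev : ∀ᶠ n in atTop, M - ε < D n :=
    hDlim.eventually (eventually_gt_nhds (by linarith))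
  obtain ⟨N, hN⟩ := eventually_atTop.mp hev
  refine ⟨max N (max m ⌈μ⌉₊), ?_, ?_⟩
  · calc μ ≤ (⌈μ⌉₊ : ℝ) := Nat.le_ceil μ
      _ ≤ ((max N (max m ⌈μ⌉₊) : ℕ) : ℝ) := by
          exact_mod_cast le_max_of_le_right (le_max_right m ⌈μ⌉₊)
  intro n hn
  have hmn : m ≤ n := by
    have : m ≤ max N (max m ⌈μ⌉₊) := le_max_of_le_right (le_max_left _ _)
    omega
  have hμn : μ < n := by
    have h1 : ⌈μ⌉₊ < n := by
      have : ⌈μ⌉₊ ≤ max N (max m ⌈μ⌉₊) := le_max_of_le_right (le_max_right _ _)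
      omega
    exact lt_of_le_of_lt (Nat.le_ceil μ) (by exact_mod_cast h1)
  have hn0 : (0 : ℝ) < n := lt_trans hμ hμn
  have hnne : (n : ℝ) ≠ 0 := ne_of_gt hn0
  have hnμ : (0 : ℝ) < (n : ℝ) - μ := by linarith
  have hnμne : (n : ℝ) - μ ≠ 0 := ne_of_gt hnμ
  have hμne : μ ≠ 0 := ne_of_gt hμ
  have e1 : (n : ℝ) * (μ / n) = μ := by field_simp
  have e2 : (n : ℝ) * (1 - μ / n) = (n : ℝ) - μ := by field_simp
  have hDgt : M - ε < D n := hN n (le_trans (le_max_left _ _) (le_of_lt hn))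
  set B : ℕ → ℝ := fun k => (n.choose k : ℝ) * (μ / n) ^ k * (1 - μ / n) ^ (n - k) with hB
  -- the value of T at m rewritten
  have hTm : ((n : ℝ) / (μ * ((n : ℝ) - μ))) * Taux n (μ / n) m = D n := by
    have h1 : n + 1 - m = (n - m) + 1 := by omega
    simp only [Taux, h1, pow_succ, hD]
    field_simp
  constructor
  · -- high threshold rule
    refine ⟨_, _, ⟨fun k => if m ≤ k then (1 : ℝ) else 0, ?_, rfl, rfl⟩, ?_⟩
    · intro k _
      by_cases h : m ≤ k <;> simp [h]
    have hS1 : ∑ k ∈ range (n + 1), (k : ℝ) * (if m ≤ k then (1 : ℝ) else 0) * B k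
        = ∑ k ∈ Ico m (n + 1), (k : ℝ) * B k := by
      rw [range_eq_Ico, ← Finset.sum_Ico_consecutive _ (Nat.zero_le m) (by omega : m ≤ n + 1)]
      have hz : ∑ k ∈ Ico 0 m, (k : ℝ) * (if m ≤ k then (1 : ℝ) else 0) * B k = 0 :=
        Finset.sum_eq_zero fun k hk => by
          have : ¬ m ≤ k := by have := (mem_Ico.mp hk).2; omega
          simp [this]
      rw [hz, zero_add]
      exact Finset.sum_congr rfl fun k hk => by simp [(mem_Ico.mp hk).1]
    have hS2 : ∑ k ∈ range (n + 1), ((n : ℝ) - k) * (if m ≤ k then (1 : ℝ) else 0) * B k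
        = ∑ k ∈ Ico m (n + 1), ((n : ℝ) - k) * B k := by
      rw [range_eq_Ico, ← Finset.sum_Ico_consecutive _ (Nat.zero_le m) (by omega : m ≤ n + 1)]
      have hz : ∑ k ∈ Ico 0 m, ((n : ℝ) - k) * (if m ≤ k then (1 : ℝ) else 0) * B k = 0 :=
        Finset.sum_eq_zero fun k hk => by
          have : ¬ m ≤ k := by have := (mem_Ico.mp hk).2; omega
          simp [this]
      rw [hz, zero_add]
      exact Finset.sum_congr rfl fun k hk => by simp [(mem_Ico.mp hk).1]
    rw [hS1, hS2, e1, e2]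
    have key : (1 / μ) * ∑ k ∈ Ico m (n + 1), (k : ℝ) * B k
        - (1 / ((n : ℝ) - μ)) * ∑ k ∈ Ico m (n + 1), ((n : ℝ) - k) * B k = D n := by
      rw [Finset.mul_sum, Finset.mul_sum, ← Finset.sum_sub_distrib]
      have hptw : ∀ k ∈ Ico m (n + 1),
          (1 / μ) * ((k : ℝ) * B k) - (1 / ((n : ℝ) - μ)) * (((n : ℝ) - k) * B k)
          = ((n : ℝ) / (μ * ((n : ℝ) - μ))) * (((k : ℝ) - (n : ℝ) * (μ / n)) * B k) := by
        intro k _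
        rw [e1]
        field_simp
        ring
      rw [Finset.sum_congr rfl hptw, ← Finset.mul_sum, sum_hi n m hmn (μ / n), hTm]
    rw [key]
    exact hDgt
  · -- low threshold rule
    refine ⟨_, _, ⟨fun k => if k < m then (1 : ℝ) else 0, ?_, rfl, rfl⟩, ?_⟩
    · intro k _
      by_cases h : k < m <;> simp [h]
    have hS1 : ∑ k ∈ range (n + 1), (k : ℝ) * (if k < m then (1 : ℝ) else 0) * B k
        = ∑ k ∈ range m, (k : ℝ) * B k := by
      rw [range_eq_Ico, ← Finset.sum_Ico_consecutive _ (Nat.zero_le m) (by omega : m ≤ n + 1)]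
      have hz : ∑ k ∈ Ico m (n + 1), (k : ℝ) * (if k < m then (1 : ℝ) else 0) * B k = 0 :=
        Finset.sum_eq_zero fun k hk => by
          have : ¬ k < m := by have := (mem_Ico.mp hk).1; omega
          simp [this]
      rw [hz, add_zero, ← range_eq_Ico]
      exact Finset.sum_congr rfl fun k hk => by simp [mem_range.mp hk]
    have hS2 : ∑ k ∈ range (n + 1), ((n : ℝ) - k) * (if k < m then (1 : ℝ) else 0) * B k
        = ∑ k ∈ range m, ((n : ℝ) - k) * B k := by
      rw [range_eq_Ico, ← Finset.sum_Ico_consecutive _ (Nat.zero_le m) (by omega : m ≤ n + 1)]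
      have hz : ∑ k ∈ Ico m (n + 1), ((n : ℝ) - k) * (if k < m then (1 : ℝ) else 0) * B k = 0 :=
        Finset.sum_eq_zero fun k hk => by
          have : ¬ k < m := by have := (mem_Ico.mp hk).1; omega
          simp [this]
      rw [hz, add_zero, ← range_eq_Ico]
      exact Finset.sum_congr rfl fun k hk => by simp [mem_range.mp hk]
    rw [hS1, hS2, e1, e2]
    have key : (1 / ((n : ℝ) - μ)) * ∑ k ∈ range m, ((n : ℝ) - k) * B k
        - (1 / μ) * ∑ k ∈ range m, (k : ℝ) * B k = D n := by
      rw [Finset.mul_sum, Finset.mul_sum, ← Finset.sum_sub_distrib]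
      have hptw : ∀ k ∈ range m,
          (1 / ((n : ℝ) - μ)) * (((n : ℝ) - k) * B k) - (1 / μ) * ((k : ℝ) * B k)
          = ((n : ℝ) / (μ * ((n : ℝ) - μ))) * (((n : ℝ) * (μ / n) - (k : ℝ)) * B k) := by
        intro k _
        rw [e1]
        field_simp
        ring
      rw [Finset.sum_congr rfl hptw, ← Finset.mul_sum, sum_lo n m hmn (μ / n), hTm]
    rw [key]
    exact hDgt
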